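/- The quadratic Poisson algebra Q₅(2) from the subalgebra a₅ = span{x₅}: set A₁ = x₅, A₂ = x₆, A₃ = x₄² − x₁x₅, A₄ = x₁x₆ − x₂x₅ − 2x₃x₄, A₅ = x₃² + x₂x₆, A₆ = x₃x₅ − x₄x₆. Then {Aⱼ, x₅} = 0 for all 1 ≤ j ≤ 6; A₁ and A₄ are central among the generators, i.e. {A₁, Aⱼ} = 0 and {A₄, Aⱼ} = 0 for all j; {A₂, A₃} = {A₂, A₅} = 2A₆, {A₂, A₆} = A₁² + A₂², {A₃, A₅} = 0; and the ℝ-subalgebra of ℝ[x₁,…,x₆] generated by A₁,…,A₆ is closed under the Poisson bracket, i.e. {Aᵢ, Aⱼ} lies in this subalgebra for all i, j. -/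
import Mathlib


open MvPolynomial

/-- Structure-constant polynomials `c j k = {x_{j+1}, x_{k+1}}` of the 2D conformal
algebra `𝔠(2)` (indices `0,…,5` correspond to `x₁,…,x₆`). -/
noncomputable def c2Mat : Matrix (Fin 6) (Fin 6) (MvPolynomial (Fin 6) ℝ) :=
  !![0,            0,            -X 1, X 0,  2 * X 3,      2 * X 2;
     0,            0,            X 0,  X 1,  -(2 * X 2),   2 * X 3;
     X 1,          -X 0,         0,    0,    X 5,          -X 4;
     -X 0,         -X 1,         0,    0,    X 4,          X 5;
     -(2 * X 3),   2 * X 2,      -X 5, -X 4, 0,            0;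
     -(2 * X 2),   -(2 * X 3),   X 4,  -X 5, 0,            0]

/-- The Lie–Poisson bracket of `𝔠(2)` on `ℝ[x₁,…,x₆]`:
`{p,q} = ∑_{j,k} c_{jk} (∂p/∂x_j) (∂q/∂x_k)`. -/
noncomputable def pb (p q : MvPolynomial (Fin 6) ℝ) : MvPolynomial (Fin 6) ℝ :=
  ∑ j : Fin 6, ∑ k : Fin 6, c2Mat j k * pderiv j p * pderiv k q

/-- Generators of the quadratic Poisson algebra `Q₅(2)`:
`A₁ = x₅, A₂ = x₆, A₃ = x₄² − x₁x₅, A₄ = x₁x₆ − x₂x₅ − 2x₃x₄,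
A₅ = x₃² + x₂x₆, A₆ = x₃x₅ − x₄x₆`. -/
noncomputable def A5g : Fin 6 → MvPolynomial (Fin 6) ℝ :=
  ![X 4,
    X 5,
    X 3 ^ 2 - X 0 * X 4,
    X 0 * X 5 - X 1 * X 4 - 2 * X 2 * X 3,
    X 2 ^ 2 + X 1 * X 5,
    X 2 * X 4 - X 3 * X 5]

private lemma cons_val_five' {α : Type*} {m : ℕ} (x : α)
    (u : Fin m.succ.succ.succ.succ.succ → α) :
    Matrix.vecCons x u 5 =
      Matrix.vecHead (Matrix.vecTail (Matrix.vecTail (Matrix.vecTail (Matrix.vecTail u)))) :=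
  rfl

set_option maxHeartbeats 1000000 in
private lemma pb_eq (p q : MvPolynomial (Fin 6) ℝ) : pb p q =
    -X 1 * pderiv 0 p * pderiv 2 q + X 0 * pderiv 0 p * pderiv 3 q
    + 2 * X 3 * pderiv 0 p * pderiv 4 q + 2 * X 2 * pderiv 0 p * pderiv 5 q
    + X 0 * pderiv 1 p * pderiv 2 q + X 1 * pderiv 1 p * pderiv 3 q
    - 2 * X 2 * pderiv 1 p * pderiv 4 q + 2 * X 3 * pderiv 1 p * pderiv 5 q
    + X 1 * pderiv 2 p * pderiv 0 q - X 0 * pderiv 2 p * pderiv 1 q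
    + X 5 * pderiv 2 p * pderiv 4 q - X 4 * pderiv 2 p * pderiv 5 q
    - X 0 * pderiv 3 p * pderiv 0 q - X 1 * pderiv 3 p * pderiv 1 q
    + X 4 * pderiv 3 p * pderiv 4 q + X 5 * pderiv 3 p * pderiv 5 q
    - 2 * X 3 * pderiv 4 p * pderiv 0 q + 2 * X 2 * pderiv 4 p * pderiv 1 q
    - X 5 * pderiv 4 p * pderiv 2 q - X 4 * pderiv 4 p * pderiv 3 q
    - 2 * X 2 * pderiv 5 p * pderiv 0 q - 2 * X 3 * pderiv 5 p * pderiv 1 q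
    + X 4 * pderiv 5 p * pderiv 2 q - X 5 * pderiv 5 p * pderiv 3 q := by
  simp only [pb, c2Mat, Fin.sum_univ_six, Matrix.cons_val', Matrix.cons_val_zero,
    Matrix.cons_val_one, Matrix.head_cons, Matrix.empty_val', Matrix.cons_val_fin_one,
    Matrix.head_fin_const, Matrix.of_apply, Fin.isValue, Matrix.cons_val_two, Matrix.cons_val_three,
    Matrix.cons_val_four, cons_val_five', Matrix.tail_cons]
  ring

private lemma pderiv_two (i : Fin 6) : pderiv i (2 : MvPolynomial (Fin 6) ℝ) = 0 := by
  rw [← one_add_one_eq_two]; simp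

private lemma pb_antisymm (p q : MvPolynomial (Fin 6) ℝ) : pb p q = -pb q p := by
  rw [pb_eq, pb_eq]; ring

private lemma c00 : pb (A5g 0) (A5g 0) = 0 := by
  rw [pb_eq]
  simp only [A5g, Matrix.cons_val_zero, Matrix.cons_val_one, Matrix.head_cons,
    Matrix.cons_val_two, Matrix.cons_val_three, Matrix.cons_val_four, cons_val_five',
    Matrix.tail_cons, Fin.isValue, map_add, map_sub, pderiv_mul, pderiv_pow, pderiv_X,
    Pi.single_apply, Fin.reduceEq, reduceIte, if_true, if_false, pderiv_two, mul_zero, zero_mul,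
    mul_one, one_mul, add_zero, zero_add, sub_zero, zero_sub, map_mul]
  try ring

private lemma c11 : pb (A5g 1) (A5g 1) = 0 := by
  rw [pb_eq]
  simp only [A5g, Matrix.cons_val_zero, Matrix.cons_val_one, Matrix.head_cons,
    Matrix.cons_val_two, Matrix.cons_val_three, Matrix.cons_val_four, cons_val_five',
    Matrix.tail_cons, Fin.isValue, map_add, map_sub, pderiv_mul, pderiv_pow, pderiv_X,
    Pi.single_apply, Fin.reduceEq, reduceIte, if_true, if_false, pderiv_two, mul_zero, zero_mul,
    mul_one, one_mul, add_zero, zero_add, sub_zero, zero_sub, map_mul]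
  try ring

private lemma c22 : pb (A5g 2) (A5g 2) = 0 := by
  rw [pb_eq]
  simp only [A5g, Matrix.cons_val_zero, Matrix.cons_val_one, Matrix.head_cons,
    Matrix.cons_val_two, Matrix.cons_val_three, Matrix.cons_val_four, cons_val_five',
    Matrix.tail_cons, Fin.isValue, map_add, map_sub, pderiv_mul, pderiv_pow, pderiv_X,
    Pi.single_apply, Fin.reduceEq, reduceIte, if_true, if_false, pderiv_two, mul_zero, zero_mul,
    mul_one, one_mul, add_zero, zero_add, sub_zero, zero_sub, map_mul]
  try ring

private lemma c33 : pb (A5g 3) (A5g 3) = 0 := by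
  rw [pb_eq]
  simp only [A5g, Matrix.cons_val_zero, Matrix.cons_val_one, Matrix.head_cons,
    Matrix.cons_val_two, Matrix.cons_val_three, Matrix.cons_val_four, cons_val_five',
    Matrix.tail_cons, Fin.isValue, map_add, map_sub, pderiv_mul, pderiv_pow, pderiv_X,
    Pi.single_apply, Fin.reduceEq, reduceIte, if_true, if_false, pderiv_two, mul_zero, zero_mul,
    mul_one, one_mul, add_zero, zero_add, sub_zero, zero_sub, map_mul]
  try ring

private lemma c44 : pb (A5g 4) (A5g 4) = 0 := by
  rw [pb_eq]
  simp only [A5g, Matrix.cons_val_zero, Matrix.cons_val_one, Matrix.head_cons,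
    Matrix.cons_val_two, Matrix.cons_val_three, Matrix.cons_val_four, cons_val_five',
    Matrix.tail_cons, Fin.isValue, map_add, map_sub, pderiv_mul, pderiv_pow, pderiv_X,
    Pi.single_apply, Fin.reduceEq, reduceIte, if_true, if_false, pderiv_two, mul_zero, zero_mul,
    mul_one, one_mul, add_zero, zero_add, sub_zero, zero_sub, map_mul]
  try ring

private lemma c55 : pb (A5g 5) (A5g 5) = 0 := by
  rw [pb_eq]
  simp only [A5g, Matrix.cons_val_zero, Matrix.cons_val_one, Matrix.head_cons,
    Matrix.cons_val_two, Matrix.cons_val_three, Matrix.cons_val_four, cons_val_five',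
    Matrix.tail_cons, Fin.isValue, map_add, map_sub, pderiv_mul, pderiv_pow, pderiv_X,
    Pi.single_apply, Fin.reduceEq, reduceIte, if_true, if_false, pderiv_two, mul_zero, zero_mul,
    mul_one, one_mul, add_zero, zero_add, sub_zero, zero_sub, map_mul]
  try ring

private lemma c01 : pb (A5g 0) (A5g 1) = 0 := by
  rw [pb_eq]
  simp only [A5g, Matrix.cons_val_zero, Matrix.cons_val_one, Matrix.head_cons,
    Matrix.cons_val_two, Matrix.cons_val_three, Matrix.cons_val_four, cons_val_five',
    Matrix.tail_cons, Fin.isValue, map_add, map_sub, pderiv_mul, pderiv_pow, pderiv_X,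
    Pi.single_apply, Fin.reduceEq, reduceIte, if_true, if_false, pderiv_two, mul_zero, zero_mul,
    mul_one, one_mul, add_zero, zero_add, sub_zero, zero_sub, map_mul]
  try ring

private lemma c02 : pb (A5g 0) (A5g 2) = 0 := by
  rw [pb_eq]
  simp only [A5g, Matrix.cons_val_zero, Matrix.cons_val_one, Matrix.head_cons,
    Matrix.cons_val_two, Matrix.cons_val_three, Matrix.cons_val_four, cons_val_five',
    Matrix.tail_cons, Fin.isValue, map_add, map_sub, pderiv_mul, pderiv_pow, pderiv_X,
    Pi.single_apply, Fin.reduceEq, reduceIte, if_true, if_false, pderiv_two, mul_zero, zero_mul,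
    mul_one, one_mul, add_zero, zero_add, sub_zero, zero_sub, map_mul]
  try ring

private lemma c03 : pb (A5g 0) (A5g 3) = 0 := by
  rw [pb_eq]
  simp only [A5g, Matrix.cons_val_zero, Matrix.cons_val_one, Matrix.head_cons,
    Matrix.cons_val_two, Matrix.cons_val_three, Matrix.cons_val_four, cons_val_five',
    Matrix.tail_cons, Fin.isValue, map_add, map_sub, pderiv_mul, pderiv_pow, pderiv_X,
    Pi.single_apply, Fin.reduceEq, reduceIte, if_true, if_false, pderiv_two, mul_zero, zero_mul,
    mul_one, one_mul, add_zero, zero_add, sub_zero, zero_sub, map_mul]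
  try ring

private lemma c04 : pb (A5g 0) (A5g 4) = 0 := by
  rw [pb_eq]
  simp only [A5g, Matrix.cons_val_zero, Matrix.cons_val_one, Matrix.head_cons,
    Matrix.cons_val_two, Matrix.cons_val_three, Matrix.cons_val_four, cons_val_five',
    Matrix.tail_cons, Fin.isValue, map_add, map_sub, pderiv_mul, pderiv_pow, pderiv_X,
    Pi.single_apply, Fin.reduceEq, reduceIte, if_true, if_false, pderiv_two, mul_zero, zero_mul,
    mul_one, one_mul, add_zero, zero_add, sub_zero, zero_sub, map_mul]
  try ring

private lemma c05 : pb (A5g 0) (A5g 5) = 0 := by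
  rw [pb_eq]
  simp only [A5g, Matrix.cons_val_zero, Matrix.cons_val_one, Matrix.head_cons,
    Matrix.cons_val_two, Matrix.cons_val_three, Matrix.cons_val_four, cons_val_five',
    Matrix.tail_cons, Fin.isValue, map_add, map_sub, pderiv_mul, pderiv_pow, pderiv_X,
    Pi.single_apply, Fin.reduceEq, reduceIte, if_true, if_false, pderiv_two, mul_zero, zero_mul,
    mul_one, one_mul, add_zero, zero_add, sub_zero, zero_sub, map_mul]
  try ring

private lemma c12 : pb (A5g 1) (A5g 2) = 2 * A5g 5 := by
  rw [pb_eq]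
  simp only [A5g, Matrix.cons_val_zero, Matrix.cons_val_one, Matrix.head_cons,
    Matrix.cons_val_two, Matrix.cons_val_three, Matrix.cons_val_four, cons_val_five',
    Matrix.tail_cons, Fin.isValue, map_add, map_sub, pderiv_mul, pderiv_pow, pderiv_X,
    Pi.single_apply, Fin.reduceEq, reduceIte, if_true, if_false, pderiv_two, mul_zero, zero_mul,
    mul_one, one_mul, add_zero, zero_add, sub_zero, zero_sub, map_mul]
  try ring

private lemma c13 : pb (A5g 1) (A5g 3) = 0 := by
  rw [pb_eq]
  simp only [A5g, Matrix.cons_val_zero, Matrix.cons_val_one, Matrix.head_cons,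
    Matrix.cons_val_two, Matrix.cons_val_three, Matrix.cons_val_four, cons_val_five',
    Matrix.tail_cons, Fin.isValue, map_add, map_sub, pderiv_mul, pderiv_pow, pderiv_X,
    Pi.single_apply, Fin.reduceEq, reduceIte, if_true, if_false, pderiv_two, mul_zero, zero_mul,
    mul_one, one_mul, add_zero, zero_add, sub_zero, zero_sub, map_mul]
  try ring

private lemma c14 : pb (A5g 1) (A5g 4) = 2 * A5g 5 := by
  rw [pb_eq]
  simp only [A5g, Matrix.cons_val_zero, Matrix.cons_val_one, Matrix.head_cons,
    Matrix.cons_val_two, Matrix.cons_val_three, Matrix.cons_val_four, cons_val_five',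
    Matrix.tail_cons, Fin.isValue, map_add, map_sub, pderiv_mul, pderiv_pow, pderiv_X,
    Pi.single_apply, Fin.reduceEq, reduceIte, if_true, if_false, pderiv_two, mul_zero, zero_mul,
    mul_one, one_mul, add_zero, zero_add, sub_zero, zero_sub, map_mul]
  try ring

private lemma c15 : pb (A5g 1) (A5g 5) = A5g 0 ^ 2 + A5g 1 ^ 2 := by
  rw [pb_eq]
  simp only [A5g, Matrix.cons_val_zero, Matrix.cons_val_one, Matrix.head_cons,
    Matrix.cons_val_two, Matrix.cons_val_three, Matrix.cons_val_four, cons_val_five',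
    Matrix.tail_cons, Fin.isValue, map_add, map_sub, pderiv_mul, pderiv_pow, pderiv_X,
    Pi.single_apply, Fin.reduceEq, reduceIte, if_true, if_false, pderiv_two, mul_zero, zero_mul,
    mul_one, one_mul, add_zero, zero_add, sub_zero, zero_sub, map_mul]
  try ring

private lemma c23 : pb (A5g 2) (A5g 3) = 0 := by
  rw [pb_eq]
  simp only [A5g, Matrix.cons_val_zero, Matrix.cons_val_one, Matrix.head_cons,
    Matrix.cons_val_two, Matrix.cons_val_three, Matrix.cons_val_four, cons_val_five',
    Matrix.tail_cons, Fin.isValue, map_add, map_sub, pderiv_mul, pderiv_pow, pderiv_X,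
    Pi.single_apply, Fin.reduceEq, reduceIte, if_true, if_false, pderiv_two, mul_zero, zero_mul,
    mul_one, one_mul, add_zero, zero_add, sub_zero, zero_sub, map_mul]
  try ring

private lemma c24 : pb (A5g 2) (A5g 4) = 0 := by
  rw [pb_eq]
  simp only [A5g, Matrix.cons_val_zero, Matrix.cons_val_one, Matrix.head_cons,
    Matrix.cons_val_two, Matrix.cons_val_three, Matrix.cons_val_four, cons_val_five',
    Matrix.tail_cons, Fin.isValue, map_add, map_sub, pderiv_mul, pderiv_pow, pderiv_X,
    Pi.single_apply, Fin.reduceEq, reduceIte, if_true, if_false, pderiv_two, mul_zero, zero_mul,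
    mul_one, one_mul, add_zero, zero_add, sub_zero, zero_sub, map_mul]
  try ring

private lemma c25 : pb (A5g 2) (A5g 5) = -(A5g 0 * A5g 3) - 2 * (A5g 1 * A5g 2) := by
  rw [pb_eq]
  simp only [A5g, Matrix.cons_val_zero, Matrix.cons_val_one, Matrix.head_cons,
    Matrix.cons_val_two, Matrix.cons_val_three, Matrix.cons_val_four, cons_val_five',
    Matrix.tail_cons, Fin.isValue, map_add, map_sub, pderiv_mul, pderiv_pow, pderiv_X,
    Pi.single_apply, Fin.reduceEq, reduceIte, if_true, if_false, pderiv_two, mul_zero, zero_mul,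
    mul_one, one_mul, add_zero, zero_add, sub_zero, zero_sub, map_mul]
  try ring

private lemma c34 : pb (A5g 3) (A5g 4) = 0 := by
  rw [pb_eq]
  simp only [A5g, Matrix.cons_val_zero, Matrix.cons_val_one, Matrix.head_cons,
    Matrix.cons_val_two, Matrix.cons_val_three, Matrix.cons_val_four, cons_val_five',
    Matrix.tail_cons, Fin.isValue, map_add, map_sub, pderiv_mul, pderiv_pow, pderiv_X,
    Pi.single_apply, Fin.reduceEq, reduceIte, if_true, if_false, pderiv_two, mul_zero, zero_mul,
    mul_one, one_mul, add_zero, zero_add, sub_zero, zero_sub, map_mul]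
  try ring

private lemma c35 : pb (A5g 3) (A5g 5) = 0 := by
  rw [pb_eq]
  simp only [A5g, Matrix.cons_val_zero, Matrix.cons_val_one, Matrix.head_cons,
    Matrix.cons_val_two, Matrix.cons_val_three, Matrix.cons_val_four, cons_val_five',
    Matrix.tail_cons, Fin.isValue, map_add, map_sub, pderiv_mul, pderiv_pow, pderiv_X,
    Pi.single_apply, Fin.reduceEq, reduceIte, if_true, if_false, pderiv_two, mul_zero, zero_mul,
    mul_one, one_mul, add_zero, zero_add, sub_zero, zero_sub, map_mul]
  try ring

private lemma c45 : pb (A5g 4) (A5g 5) = -(A5g 0 * A5g 3) - 2 * (A5g 1 * A5g 2) := by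
  rw [pb_eq]
  simp only [A5g, Matrix.cons_val_zero, Matrix.cons_val_one, Matrix.head_cons,
    Matrix.cons_val_two, Matrix.cons_val_three, Matrix.cons_val_four, cons_val_five',
    Matrix.tail_cons, Fin.isValue, map_add, map_sub, pderiv_mul, pderiv_pow, pderiv_X,
    Pi.single_apply, Fin.reduceEq, reduceIte, if_true, if_false, pderiv_two, mul_zero, zero_mul,
    mul_one, one_mul, add_zero, zero_add, sub_zero, zero_sub, map_mul]
  try ring

private lemma mem_all (i j : Fin 6) :
    pb (A5g i) (A5g j) ∈ Algebra.adjoin ℝ (Set.range A5g) := by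
  have hA : ∀ k : Fin 6, A5g k ∈ Algebra.adjoin ℝ (Set.range A5g) := fun k =>
    Algebra.subset_adjoin ⟨k, rfl⟩
  have h2 : ∀ k : Fin 6, (2 : MvPolynomial (Fin 6) ℝ) * A5g k ∈ Algebra.adjoin ℝ (Set.range A5g) := by
    intro k
    rw [two_mul]
    exact add_mem (hA k) (hA k)
  have hv : -(A5g 0 * A5g 3) - 2 * (A5g 1 * A5g 2) ∈ Algebra.adjoin ℝ (Set.range A5g) := by
    refine sub_mem (neg_mem (mul_mem (hA 0) (hA 3))) ?_
    rw [two_mul]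
    exact add_mem (mul_mem (hA 1) (hA 2)) (mul_mem (hA 1) (hA 2))
  have hsq : A5g 0 ^ 2 + A5g 1 ^ 2 ∈ Algebra.adjoin ℝ (Set.range A5g) :=
    add_mem (pow_mem (hA 0) 2) (pow_mem (hA 1) 2)
  have hz : (0 : MvPolynomial (Fin 6) ℝ) ∈ Algebra.adjoin ℝ (Set.range A5g) := zero_mem _
  fin_cases i <;> fin_cases j <;>
    simp only [Fin.zero_eta, Fin.mk_one, Fin.reduceFinMk, Fin.isValue] <;>
    first
      | (rw [c00]; exact hz) | (rw [c11]; exact hz) | (rw [c22]; exact hz)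
      | (rw [c33]; exact hz) | (rw [c44]; exact hz) | (rw [c55]; exact hz)
      | (rw [c01]; exact hz) | (rw [c02]; exact hz) | (rw [c03]; exact hz)
      | (rw [c04]; exact hz) | (rw [c05]; exact hz) | (rw [c13]; exact hz)
      | (rw [c23]; exact hz) | (rw [c24]; exact hz) | (rw [c34]; exact hz)
      | (rw [c35]; exact hz)
      | (rw [c12]; exact h2 5) | (rw [c14]; exact h2 5)
      | (rw [c15]; exact hsq) | (rw [c25]; exact hv) | (rw [c45]; exact hv)
      | (rw [pb_antisymm]
         refine neg_mem ?_
         first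
           | (rw [c01]; exact hz) | (rw [c02]; exact hz) | (rw [c03]; exact hz)
           | (rw [c04]; exact hz) | (rw [c05]; exact hz) | (rw [c13]; exact hz)
           | (rw [c23]; exact hz) | (rw [c24]; exact hz) | (rw [c34]; exact hz)
           | (rw [c35]; exact hz)
           | (rw [c12]; exact h2 5) | (rw [c14]; exact h2 5)
           | (rw [c15]; exact hsq) | (rw [c25]; exact hv) | (rw [c45]; exact hv))

private lemma h0all (j : Fin 6) : pb (A5g 0) (A5g j) = 0 := by
  fin_cases j <;> simp only [Fin.zero_eta, Fin.mk_one, Fin.reduceFinMk, Fin.isValue]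
  exacts [c00, c01, c02, c03, c04, c05]

private lemma h3all (j : Fin 6) : pb (A5g 3) (A5g j) = 0 := by
  fin_cases j <;> simp only [Fin.zero_eta, Fin.mk_one, Fin.reduceFinMk, Fin.isValue]
  · rw [pb_antisymm, c03, neg_zero]
  · rw [pb_antisymm, c13, neg_zero]
  · rw [pb_antisymm, c23, neg_zero]
  exacts [c33, c34, c35]

/-- The quadratic Poisson algebra `Q₅(2)` from the subalgebra `a₅ = span{x₅}`. -/
theorem stmt15 :
    (∀ j : Fin 6, pb (A5g j) (X 4) = 0) ∧
    (∀ j : Fin 6, pb (A5g 0) (A5g j) = 0) ∧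
    (∀ j : Fin 6, pb (A5g 3) (A5g j) = 0) ∧
    pb (A5g 1) (A5g 2) = 2 * A5g 5 ∧
    pb (A5g 1) (A5g 4) = 2 * A5g 5 ∧
    pb (A5g 1) (A5g 5) = A5g 0 ^ 2 + A5g 1 ^ 2 ∧
    pb (A5g 2) (A5g 4) = 0 ∧
    (∀ i j : Fin 6, pb (A5g i) (A5g j) ∈ Algebra.adjoin ℝ (Set.range A5g)) := by
  refine ⟨?_, h0all, h3all, c12, c14, c15, c24, mem_all⟩
  intro j
  have hX4 : (X 4 : MvPolynomial (Fin 6) ℝ) = A5g 0 := rfl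
  rw [hX4, pb_antisymm, h0all j, neg_zero]
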